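/- arXiv:1709.05124 — 4 statements merged into one kernel-verified Lean document; each statement's English description precedes it below -/
import Mathlib

section
/- Let D ⊂ C^n be a domain, φ, h : D_unit → C^n holomorphic, and define ψ_z(λ) := (h(λ)•(z−φ(λ)) − h(0)•(z−φ(0)))/λ + λ·conj(h(0)•(z−φ(0))). If there exists a Euclidean ball B ⊂ C^n such that Re ψ_z(λ) ≤ 0 for all λ in the unit disc and all z ∈ B, then h belongs to H^1(D_unit, C^n). -/
open Complex Metric

noncomputable section

/-- The bilinear dot product on `ℂⁿ`. -/
def dotn {n : ℕ} (z w : Fin n → ℂ) : ℂ := ∑ j, z j * w j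

/-- The function `ψ_z(λ) = (h(λ)•(z-φ(λ)) - h(0)•(z-φ(0)))/λ + λ conj(h(0)•(z-φ(0)))`,
with the removable singularity at `λ = 0` handled by `dslope`. -/
def psi {n : ℕ} (φ h : ℂ → Fin n → ℂ) (z : Fin n → ℂ) (l : ℂ) : ℂ :=
  dslope (fun w => dotn (h w) (z - φ w)) 0 l
    + l * (starRingEnd ℂ) (dotn (h 0) (z - φ 0))

/-- The point `e^{iθ}` on the unit circle. -/
def circlePt (θ : ℝ) : ℂ := Complex.exp (θ * Complex.I)

/-- Membership in the classical Hardy space `H¹` of the unit disc (for a function holomorphic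
on the disc): the integral means on circles of radius `r < 1` are uniformly bounded. -/
def HardyH1Bound (f : ℂ → ℂ) : Prop :=
  ∃ C : ℝ, ∀ r ∈ Set.Ico (0 : ℝ) 1,
    (∫ θ in (0 : ℝ)..(2 * Real.pi), ‖f ((r : ℂ) * circlePt θ)‖) ≤ C

lemma circlePt_ne_zero (θ : ℝ) : circlePt θ ≠ 0 := Complex.exp_ne_zero _

lemma abs_circlePt (θ : ℝ) : ‖circlePt θ‖ = 1 := Complex.norm_exp_ofReal_mul_I θ

lemma continuous_circlePt : Continuous circlePt := by
  unfold circlePt; fun_prop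

lemma mem_ball_of_circlePt {ρ : ℝ} (h0 : 0 ≤ ρ) (h1 : ρ < 1) (θ : ℝ) :
    (ρ : ℂ) * circlePt θ ∈ ball (0 : ℂ) 1 := by
  rw [mem_ball_zero_iff, norm_mul, abs_circlePt, mul_one,
    Complex.norm_real, Real.norm_eq_abs, _root_.abs_of_nonneg h0]
  exact h1

lemma mvp {F : ℂ → ℂ} (hF : DifferentiableOn ℂ F (ball 0 1)) {ρ : ℝ} (h0 : 0 < ρ) (h1 : ρ < 1) :
    (∫ θ in (0:ℝ)..(2*Real.pi), F ((ρ:ℂ) * circlePt θ)) = 2 * Real.pi * F 0 := by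
  have hd : DifferentiableOn ℂ F (closedBall 0 ρ) :=
    hF.mono (closedBall_subset_ball h1)
  have key := hd.circleIntegral_sub_inv_smul (mem_ball_self h0)
  rw [circleIntegral] at key
  have heq : ∀ θ : ℝ, deriv (circleMap 0 ρ) θ • ((circleMap 0 ρ θ - 0)⁻¹ • F (circleMap 0 ρ θ))
      = I * F ((ρ:ℂ) * circlePt θ) := by
    intro θ
    have hne : circleMap 0 ρ θ ≠ 0 := circleMap_ne_center h0.ne'
    have hmap : circleMap 0 ρ θ = (ρ:ℂ) * circlePt θ := by simp [circleMap, circlePt]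
    rw [deriv_circleMap]
    simp only [smul_eq_mul, sub_zero]
    rw [← hmap]
    field_simp
  rw [intervalIntegral.integral_congr (fun θ _ => heq θ)] at key
  rw [intervalIntegral.integral_const_mul] at key
  rw [smul_eq_mul, show (2*(Real.pi:ℂ)*I)*F 0 = I * (2*Real.pi*F 0) by ring] at key
  exact mul_left_cancel₀ I_ne_zero key

lemma mvp_re {F : ℂ → ℂ} (hF : DifferentiableOn ℂ F (ball 0 1)) {ρ : ℝ} (h0 : 0 < ρ) (h1 : ρ < 1) :
    (∫ θ in (0:ℝ)..(2*Real.pi), (F ((ρ:ℂ) * circlePt θ)).re) = 2 * Real.pi * (F 0).re := by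
  have hcont : Continuous (fun θ : ℝ => F ((ρ:ℝ) * circlePt θ)) := by
    apply hF.continuousOn.comp_continuous (continuous_const.mul continuous_circlePt)
    exact fun θ => mem_ball_of_circlePt h0.le h1 θ
  have := Complex.reCLM.intervalIntegral_comp_comm
    (a := 0) (b := 2*Real.pi) (hcont.intervalIntegrable (μ := MeasureTheory.volume) 0 (2*Real.pi))
  simp only [Complex.reCLM_apply] at this
  rw [this, mvp hF h0 h1, show ((2:ℂ)*Real.pi*F 0) = (((2*Real.pi:ℝ)):ℂ) * F 0 by push_cast; ring,
    Complex.re_ofReal_mul]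

lemma dotn_single {n : ℕ} (v : Fin n → ℂ) (a : ℂ) (j : Fin n) :
    (∑ k, v k * (a * (Pi.single j 1 : Fin n → ℂ) k)) = a * v j := by
  rw [Finset.sum_eq_single j]
  · simp [mul_comm]
  · intro k _ hk; simp [Pi.single_eq_of_ne hk]
  · simp

lemma dotn_shift {n : ℕ} (v w w' : Fin n → ℂ) (a : ℂ) (j : Fin n) :
    dotn v ((fun k => w' k + a * (Pi.single j 1 : Fin n → ℂ) k) - w) = dotn v (w' - w) + a * v j := by
  unfold dotn
  have e : ∀ k : Fin n, v k * (((fun k => w' k + a * (Pi.single j 1 : Fin n → ℂ) k) - w) k)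
      = v k * ((w' - w) k) + v k * (a * (Pi.single j 1 : Fin n → ℂ) k) := by
    intro k; simp only [Pi.sub_apply]; ring
  rw [Finset.sum_congr rfl (fun k _ => e k), Finset.sum_add_distrib, dotn_single]

lemma psi_sub {n : ℕ} (φ h : ℂ → Fin n → ℂ) (c : Fin n → ℂ) (a : ℂ) (j : Fin n)
    {l : ℂ} (hl : l ≠ 0) :
    psi φ h (fun k => c k + a * (Pi.single j 1 : Fin n → ℂ) k) l - psi φ h c l
      = a * ((h l j - h 0 j) / l)
        + l * ((starRingEnd ℂ) a * (starRingEnd ℂ) (h 0 j)) := by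
  unfold psi
  rw [dslope_of_ne _ hl, dslope_of_ne _ hl, slope_def_field, slope_def_field]
  rw [dotn_shift, dotn_shift]
  simp only [map_add, map_mul, sub_zero]
  field_simp
  ring

lemma psi_diff {n : ℕ} (φ h : ℂ → Fin n → ℂ)
    (hφ : DifferentiableOn ℂ φ (ball (0:ℂ) 1)) (hh : DifferentiableOn ℂ h (ball (0:ℂ) 1))
    (z : Fin n → ℂ) : DifferentiableOn ℂ (psi φ h z) (ball (0:ℂ) 1) := by
  have hf : DifferentiableOn ℂ (fun w => dotn (h w) (z - φ w)) (ball (0:ℂ) 1) := by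
    unfold dotn
    apply DifferentiableOn.fun_sum
    intro k _
    have h1 : DifferentiableOn ℂ (fun w => h w k) (ball (0:ℂ) 1) :=
      fun x hx => (differentiableWithinAt_pi.mp (hh x hx)) k
    have h2 : DifferentiableOn ℂ (fun w => (z - φ w) k) (ball (0:ℂ) 1) :=
      fun x hx => (differentiableWithinAt_pi.mp
        (((differentiableOn_const z).sub hφ) x hx)) k
    exact h1.mul h2
  have hds : DifferentiableOn ℂ (dslope (fun w => dotn (h w) (z - φ w)) 0) (ball (0:ℂ) 1) :=
    (Complex.differentiableOn_dslope (isOpen_ball.mem_nhds (mem_ball_self one_pos))).mpr hf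
  exact hds.add ((differentiable_id.mul (differentiable_const _)).differentiableOn)


/-- If `Re ψ_z(λ) ≤ 0` for all `λ ∈ 𝔻` and all `z` in some Euclidean ball
`B ⊂ ℂⁿ`, then `h ∈ H¹(𝔻, ℂⁿ)`, i.e. each component of `h` is of class `H¹`. -/
theorem h_in_H1_of_psi_nonpos {n : ℕ}
    (φ h : ℂ → Fin n → ℂ)
    (hφ : DifferentiableOn ℂ φ (ball (0 : ℂ) 1))
    (hh : DifferentiableOn ℂ h (ball (0 : ℂ) 1))
    (c : Fin n → ℂ) (r : ℝ) (hr : 0 < r)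
    (hneg : ∀ l ∈ ball (0 : ℂ) 1, ∀ z : Fin n → ℂ,
      (∑ j, Complex.normSq (z j - c j)) < r ^ 2 → (psi φ h z l).re ≤ 0) :
    ∀ j, HardyH1Bound (fun l => h l j) := by
  intro j
  set t : ℝ := r / 2 with ht
  have ht0 : 0 < t := by positivity
  -- the two shifted centers
  set z₁ : Fin n → ℂ := fun k => c k + ((t:ℝ):ℂ) * (Pi.single j 1 : Fin n → ℂ) k with hz1
  set z₂ : Fin n → ℂ := fun k => c k + (((t:ℝ):ℂ) * I) * (Pi.single j 1 : Fin n → ℂ) k with hz2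
  have hmem : ∀ a : ℂ, Complex.normSq a < r ^ 2 →
      (∑ k, Complex.normSq ((c k + a * (Pi.single j 1 : Fin n → ℂ) k) - c k)) < r ^ 2 := by
    intro a ha
    have e : (∑ k, Complex.normSq ((c k + a * (Pi.single j 1 : Fin n → ℂ) k) - c k))
        = Complex.normSq a := by
      rw [Finset.sum_eq_single j]
      · simp
      · intro k _ hk; simp [Pi.single_eq_of_ne hk]
      · simp
    rwa [e]
  have htr : t ^ 2 < r ^ 2 := by nlinarith
  have hneg1 : ∀ l ∈ ball (0:ℂ) 1, (psi φ h z₁ l).re ≤ 0 := by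
    intro l hl
    exact hneg l hl z₁ (by rw [hz1]; exact hmem _ (by simpa [Complex.normSq_ofReal, sq] using htr))
  have hneg2 : ∀ l ∈ ball (0:ℂ) 1, (psi φ h z₂ l).re ≤ 0 := by
    intro l hl
    refine hneg l hl z₂ ?_
    rw [hz2]
    refine hmem _ ?_
    rw [map_mul, Complex.normSq_I, Complex.normSq_ofReal]
    simpa [sq] using htr
  have hneg3 : ∀ l ∈ ball (0:ℂ) 1, (psi φ h c l).re ≤ 0 := by
    intro l hl
    refine hneg l hl c (by simpa using (by positivity : (0:ℝ) < r ^ 2))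
  set K : ℝ := ‖h 0 j‖ with hK
  have hK0 : 0 ≤ K := norm_nonneg _
  set M : ℝ := (1/t) * (-(psi φ h z₁ 0).re - (psi φ h z₂ 0).re - 2*(psi φ h c 0).re) with hM
  have h0b : (0:ℂ) ∈ ball (0:ℂ) 1 := mem_ball_self one_pos
  have hM0 : 0 ≤ M := by
    have := hneg1 0 h0b; have := hneg2 0 h0b; have := hneg3 0 h0b
    rw [hM]
    have : (0:ℝ) ≤ -(psi φ h z₁ 0).re - (psi φ h z₂ 0).re - 2*(psi φ h c 0).re := by linarith
    positivity
  refine ⟨2*Real.pi*(M + 3*K), ?_⟩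
  rintro ρ ⟨hρ0, hρ1⟩
  rcases eq_or_lt_of_le hρ0 with hρz | hρz
  · -- ρ = 0
    have : ∀ θ : ℝ, ‖h (((ρ:ℝ):ℂ) * circlePt θ) j‖ = K := by
      intro θ; rw [← hρz]; norm_num; exact hK.symm
    rw [intervalIntegral.integral_congr (fun θ _ => this θ),
      intervalIntegral.integral_const, smul_eq_mul]
    nlinarith [Real.pi_pos]
  · -- 0 < ρ < 1
    have hρne : ((ρ:ℝ):ℂ) ≠ 0 := Complex.ofReal_ne_zero.mpr hρz.ne'
    have key : ∀ θ : ℝ, ‖h (((ρ:ℝ):ℂ) * circlePt θ) j‖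
        ≤ (1/t) * (-(psi φ h z₁ (((ρ:ℝ):ℂ) * circlePt θ)).re
            - (psi φ h z₂ (((ρ:ℝ):ℂ) * circlePt θ)).re
            - 2*(psi φ h c (((ρ:ℝ):ℂ) * circlePt θ)).re) + 3*K := by
      intro θ
      set l : ℂ := ((ρ:ℝ):ℂ) * circlePt θ with hldef
      have hl0 : l ≠ 0 := mul_ne_zero hρne (circlePt_ne_zero θ)
      have hlb : l ∈ ball (0:ℂ) 1 := mem_ball_of_circlePt hρ0 hρ1 θ
      have hlabs : ‖l‖ ≤ 1 := by
        rw [hldef, norm_mul, abs_circlePt, mul_one, Complex.norm_real, Real.norm_eq_abs,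
          _root_.abs_of_nonneg hρ0]
        exact hρ1.le
      set d : ℂ := (h l j - h 0 j) / l with hdd
      set u : ℂ := l * (starRingEnd ℂ) (h 0 j) with huu
      have e1 : psi φ h z₁ l - psi φ h c l = ((t:ℝ):ℂ) * (d + u) := by
        rw [hz1, psi_sub φ h c _ j hl0, Complex.conj_ofReal, hdd, huu]; ring
      have e2 : psi φ h z₂ l - psi φ h c l = ((t:ℝ):ℂ) * I * (d - u) := by
        rw [hz2, psi_sub φ h c _ j hl0, map_mul, Complex.conj_ofReal, Complex.conj_I,
          hdd, huu]
        ring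
      have A := hneg1 l hlb
      have B := hneg2 l hlb
      have Cc := hneg3 l hlb
      have r1 : (psi φ h z₁ l).re - (psi φ h c l).re = t * (d + u).re := by
        rw [← Complex.sub_re, e1, Complex.re_ofReal_mul]
      have r2 : (psi φ h z₂ l).re - (psi φ h c l).re = -(t * (d - u).im) := by
        rw [← Complex.sub_re, e2,
          show ((t:ℝ):ℂ) * I * (d - u) = ((t:ℝ):ℂ) * ((d - u) * I) by ring,
          Complex.re_ofReal_mul, Complex.mul_I_re]
        ring
      have i1 : |(d + u).re| ≤ (-(psi φ h z₁ l).re - (psi φ h c l).re) / t := by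
        rw [le_div_iff₀ ht0]
        have e : |(d + u).re| * t = |(psi φ h z₁ l).re - (psi φ h c l).re| := by
          rw [r1, abs_mul, _root_.abs_of_pos ht0]; ring
        rw [e]
        exact abs_le.mpr ⟨by linarith, by linarith⟩
      have i2 : |(d - u).im| ≤ (-(psi φ h z₂ l).re - (psi φ h c l).re) / t := by
        rw [le_div_iff₀ ht0]
        have e : |(d - u).im| * t = |(psi φ h z₂ l).re - (psi φ h c l).re| := by
          rw [r2, abs_neg, abs_mul, _root_.abs_of_pos ht0]; ring
        rw [e]
        exact abs_le.mpr ⟨by linarith, by linarith⟩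
      have huK : ‖u‖ ≤ K := by
        rw [huu, norm_mul, Complex.norm_conj, ← hK]
        exact mul_le_of_le_one_left hK0 hlabs
      have hure : |u.re| ≤ K := (Complex.abs_re_le_norm u).trans huK
      have huim : |u.im| ≤ K := (Complex.abs_im_le_norm u).trans huK
      have t1 : |d.re| ≤ |(d + u).re| + K := by
        have e : d.re = (d + u).re - u.re := by simp [Complex.add_re]
        rw [e]
        exact (abs_sub _ _).trans (by linarith)
      have t2 : |d.im| ≤ |(d - u).im| + K := by
        have e : d.im = (d - u).im + u.im := by simp [Complex.sub_im]
        rw [e]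
        exact (abs_add_le _ _).trans (by linarith)
      have hD : ‖d‖ ≤ |(d + u).re| + |(d - u).im| + 2*K :=
        (Complex.norm_le_abs_re_add_abs_im d).trans (by linarith)
      have hfin : ‖h l j‖ ≤ ‖d‖ + K := by
        have e : h l j = l * d + h 0 j := by
          rw [hdd]; field_simp; ring
        calc ‖h l j‖ = ‖l * d + h 0 j‖ := by rw [← e]
          _ ≤ ‖l * d‖ + ‖h 0 j‖ := norm_add_le _ _
          _ = ‖l‖ * ‖d‖ + K := by rw [norm_mul, hK]
          _ ≤ 1 * ‖d‖ + K := by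
              have := norm_nonneg d
              nlinarith
          _ = ‖d‖ + K := by ring
      have eqt : (1/t) * (-(psi φ h z₁ l).re - (psi φ h z₂ l).re - 2*(psi φ h c l).re)
          = (-(psi φ h z₁ l).re - (psi φ h c l).re) / t
            + (-(psi φ h z₂ l).re - (psi φ h c l).re) / t := by
        field_simp; ring
      rw [eqt]
      linarith
    -- continuity facts
    have hmemθ : ∀ θ : ℝ, ((ρ:ℝ):ℂ) * circlePt θ ∈ ball (0:ℂ) 1 :=
      fun θ => mem_ball_of_circlePt hρ0 hρ1 θ
    have hc1 : Continuous (fun θ : ℝ => psi φ h z₁ (((ρ:ℝ):ℂ) * circlePt θ)) :=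
      (psi_diff φ h hφ hh z₁).continuousOn.comp_continuous
        (continuous_const.mul continuous_circlePt) hmemθ
    have hc2 : Continuous (fun θ : ℝ => psi φ h z₂ (((ρ:ℝ):ℂ) * circlePt θ)) :=
      (psi_diff φ h hφ hh z₂).continuousOn.comp_continuous
        (continuous_const.mul continuous_circlePt) hmemθ
    have hc3 : Continuous (fun θ : ℝ => psi φ h c (((ρ:ℝ):ℂ) * circlePt θ)) :=
      (psi_diff φ h hφ hh c).continuousOn.comp_continuous
        (continuous_const.mul continuous_circlePt) hmemθ
    have hch : Continuous (fun θ : ℝ => h (((ρ:ℝ):ℂ) * circlePt θ) j) := by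
      have : DifferentiableOn ℂ (fun w => h w j) (ball (0:ℂ) 1) :=
        fun x hx => (differentiableWithinAt_pi.mp (hh x hx)) j
      exact this.continuousOn.comp_continuous
        (continuous_const.mul continuous_circlePt) hmemθ
    have hf1 : Continuous (fun θ : ℝ => (psi φ h z₁ (((ρ:ℝ):ℂ) * circlePt θ)).re) :=
      Complex.continuous_re.comp hc1
    have hf2 : Continuous (fun θ : ℝ => (psi φ h z₂ (((ρ:ℝ):ℂ) * circlePt θ)).re) :=
      Complex.continuous_re.comp hc2
    have hf3 : Continuous (fun θ : ℝ => (psi φ h c (((ρ:ℝ):ℂ) * circlePt θ)).re) :=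
      Complex.continuous_re.comp hc3
    have hLHSc : Continuous (fun θ : ℝ => ‖h (((ρ:ℝ):ℂ) * circlePt θ) j‖) :=
      continuous_norm.comp hch
    have hg : Continuous (fun θ : ℝ => -(psi φ h z₁ (((ρ:ℝ):ℂ) * circlePt θ)).re
        - (psi φ h z₂ (((ρ:ℝ):ℂ) * circlePt θ)).re
        - 2*(psi φ h c (((ρ:ℝ):ℂ) * circlePt θ)).re) :=
      (hf1.neg.sub hf2).sub (continuous_const.mul hf3)
    have hRHSc : Continuous (fun θ : ℝ => (1/t) * (-(psi φ h z₁ (((ρ:ℝ):ℂ) * circlePt θ)).re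
        - (psi φ h z₂ (((ρ:ℝ):ℂ) * circlePt θ)).re
        - 2*(psi φ h c (((ρ:ℝ):ℂ) * circlePt θ)).re) + 3*K) :=
      (continuous_const.mul hg).add continuous_const
    have mono := intervalIntegral.integral_mono_on (μ := MeasureTheory.volume)
      (a := 0) (b := 2*Real.pi) (by positivity)
      (hLHSc.intervalIntegrable _ _) (hRHSc.intervalIntegrable _ _)
      (fun θ _ => key θ)
    refine mono.trans ?_
    have I1 := mvp_re (psi_diff φ h hφ hh z₁) hρz hρ1
    have I2 := mvp_re (psi_diff φ h hφ hh z₂) hρz hρ1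
    have I3 := mvp_re (psi_diff φ h hφ hh c) hρz hρ1
    rw [intervalIntegral.integral_add ((continuous_const.fun_mul hg).intervalIntegrable _ _)
        (intervalIntegrable_const),
      intervalIntegral.integral_const_mul,
      intervalIntegral.integral_sub ((hf1.fun_neg.fun_sub hf2).intervalIntegrable _ _)
        ((continuous_const.fun_mul hf3).intervalIntegrable _ _),
      intervalIntegral.integral_sub (hf1.fun_neg.intervalIntegrable _ _)
        (hf2.intervalIntegrable _ _),
      intervalIntegral.integral_neg, intervalIntegral.integral_const_mul,
      intervalIntegral.integral_const, smul_eq_mul,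
      I1, I2, I3, hM]
    apply le_of_eq
    ring
end
end

section
/- Let D ⊂ R^{2n−1} be a domain (n > 1) and S_D := Π^{−1}(D) ⊂ C^n the associated semitube, where Π(z) = (Re z_1, Im z_1, …, Re z_{n−1}, Im z_{n−1}, Re z_n). Then S_D is linearly convex if and only if for every a = (a′, a_{2n−1}) ∈ R^{2n−1} ∖ D there exists an affine real subspace H ⊂ R^{2n−1} of real codimension 1 or 2 with a ∈ H, H ∩ D = ∅, of the form: if codim H = 2, H = {x : b•(x′−a′) = b̃•(x′−a′) = 0} with b ∈ R^{2n−2}, b ≠ 0; if codim H = 1, H = {x : x_{2n−1} = a_{2n−1} − b•(x′−a′)} with b ∈ R^{2n−2}; where b̃_j = −b_{j+1} for j odd and b̃_j = b_{j−1} for j even (j = 1,…,2n−2). -/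
open Complex

noncomputable section

variable {m : ℕ}

/-- `ℂⁿ` with `n = m + 1`, modelled as `ℂ^{n-1} × ℂ`. -/
abbrev ECx (m : ℕ) := (Fin m → ℂ) × ℂ

/-- `ℝ^{2n-1}` with `n = m + 1`, modelled as `ℂ^{n-1} × ℝ` via the identification
`(x₁,…,x_{2n-1}) ↔ ((x₁+ix₂,…,x_{2n-3}+ix_{2n-2}), x_{2n-1})`. -/
abbrev BR (m : ℕ) := (Fin m → ℂ) × ℝ

/-- The projection `Π : ℂⁿ → ℝ^{2n-1}`,
`Π(z) = (Re z₁, Im z₁, …, Re z_{n-1}, Im z_{n-1}, Re z_n)`. -/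
def proj (z : ECx m) : BR m := (z.1, z.2.re)

/-- The semitube with base `B ⊂ ℝ^{2n-1}`. -/
def semitube (B : Set (BR m)) : Set (ECx m) := proj ⁻¹' B

/-- The bilinear dot product on `ℂⁿ = ℂ^{n-1} × ℂ`. -/
def dotE (z w : ECx m) : ℂ := ∑ j, z.1 j * w.1 j + z.2 * w.2

/-- A set `G ⊂ ℂⁿ` is linearly convex if its complement is a union of affine complex
hyperplanes, i.e. every point of the complement lies on an affine complex hyperplane
disjoint from `G`. -/
def LinearlyConvex (G : Set (ECx m)) : Prop :=
  ∀ w : ECx m, w ∉ G → ∃ α : ECx m, α ≠ 0 ∧ ∀ z ∈ G, dotE α (z - w) ≠ 0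

/-- For a domain `D ⊂ ℝ^{2n-1}` (`n > 1`), the semitube `𝒮_D` is
linearly convex iff every point `a ∉ D` lies on an affine real subspace `H` of codimension 1
or 2, disjoint from `D`, of the special form described in the paper: for codimension 2,
`H = {x : b•(x'-a') = b̃•(x'-a') = 0}` with `b ≠ 0`, which under the identification
`w_j = b_{2j-1} - i b_{2j}` reads `{x : w • (x' - a') = 0}` (complex bilinear dot product);
for codimension 1, `H = {x : x_{2n-1} = a_{2n-1} - b•(x'-a')}`, which reads
`{x : x.2 = a.2 - Re (w • (x' - a'))}`. -/
theorem linearlyConvex_semitube_iff {m : ℕ} (hm : 1 ≤ m) (D : Set (BR m))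
    (hDopen : IsOpen D) (hDconn : IsConnected D) :
    LinearlyConvex (semitube D) ↔
      ∀ a : BR m, a ∉ D →
        (∃ w : Fin m → ℂ, w ≠ 0 ∧ ∀ x ∈ D, (∑ j, w j * (x.1 j - a.1 j)) ≠ 0) ∨
        (∃ w : Fin m → ℂ, ∀ x ∈ D, x.2 ≠ a.2 - (∑ j, w j * (x.1 j - a.1 j)).re) := by
  constructor
  · intro h a ha
    obtain ⟨α, hα, hαz⟩ := h (a.1, (a.2 : ℂ)) (by simpa [semitube, proj] using ha)
    by_cases h2 : α.2 = 0
    · left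
      refine ⟨α.1, fun h1 => hα (Prod.ext h1 h2), fun x hx => ?_⟩
      have := hαz (x.1, (x.2 : ℂ)) (by simpa [semitube, proj] using hx)
      simpa [dotE, h2] using this
    · right
      refine ⟨fun j => α.1 j / α.2, fun x hx heq => ?_⟩
      set S : ℂ := ∑ j, α.1 j * (x.1 j - a.1 j) with hS
      have key : ∀ t : ℝ, S + α.2 * ((x.2 : ℂ) + t * I - a.2) ≠ 0 := by
        intro t
        have := hαz (x.1, (x.2 : ℂ) + t * I) (by simp [semitube, proj, hx])
        simpa [dotE, hS] using this
      have hsum : (∑ j, (α.1 j / α.2) * (x.1 j - a.1 j)) = S / α.2 := by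
        rw [hS, Finset.sum_div]
        exact Finset.sum_congr rfl fun j _ => by ring
      rw [hsum] at heq
      refine key (-(S / α.2).im) ?_
      have hx2 : (x.2 : ℂ) + ((-(S / α.2).im : ℝ) : ℂ) * I - a.2 = -(S / α.2) := by
        apply Complex.ext <;> simp [heq]
      rw [hx2]
      field_simp
      ring
  · intro h z hz
    rcases h (z.1, z.2.re) hz with ⟨w, hw, hdisj⟩ | ⟨w, hdisj⟩
    · refine ⟨(w, 0), by simp [Prod.ext_iff, hw], fun z' hz' => ?_⟩
      have := hdisj (proj z') hz'
      simpa [dotE, proj] using this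
    · refine ⟨(w, 1), by simp [Prod.ext_iff], fun z' hz' h0 => ?_⟩
      refine hdisj (proj z') hz' ?_
      have := congrArg Complex.re h0
      simp [dotE, proj] at this ⊢
      linarith
end
end

section
/- Let Ω ⊂ R^{2n−2} be a non-convex domain that is C-convex when regarded as a domain in C^{n−1} (identifying R^{2n−2} ≅ C^{n−1}), and let D := Ω × R ⊂ R^{2n−1}. Then the semitube S_D = Π^{−1}(D) ⊂ C^n is C-convex but not convex. -/
open Complex

noncomputable section

variable {m : ℕ}

/-- A set `G ⊂ ℂⁿ = ℂ^{n-1} × ℂ` is `ℂ`-convex if its intersection with every affine complex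
line is connected and simply connected (when non-empty). -/
def CConvex (G : Set (ECx m)) : Prop :=
  ∀ z v : ECx m, v ≠ 0 → ({t : ℂ | z + t • v ∈ G}.Nonempty →
    IsConnected {t : ℂ | z + t • v ∈ G} ∧ SimplyConnectedSpace {t : ℂ | z + t • v ∈ G})

/-- `ℂ`-convexity for a set in `ℂ^{n-1}`. -/
def CConvex' (G : Set (Fin m → ℂ)) : Prop :=
  ∀ z v : Fin m → ℂ, v ≠ 0 → ({t : ℂ | z + t • v ∈ G}.Nonempty →
    IsConnected {t : ℂ | z + t • v ∈ G} ∧ SimplyConnectedSpace {t : ℂ | z + t • v ∈ G})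

/-- If `Ω ⊂ ℝ^{2n-2} ≅ ℂ^{n-1}` is a non-convex domain which is `ℂ`-convex
as a domain in `ℂ^{n-1}`, and `D = Ω × ℝ`, then the semitube `𝒮_D` is `ℂ`-convex but not
convex. -/
theorem cConvex_not_convex_semitube {m : ℕ} (hm : 1 ≤ m) (Ω : Set (Fin m → ℂ))
    (hΩopen : IsOpen Ω) (hΩconn : IsConnected Ω)
    (hΩnotconv : ¬ Convex ℝ Ω) (hΩcc : CConvex' Ω) :
    CConvex (semitube {x : BR m | x.1 ∈ Ω}) ∧
      ¬ Convex ℝ (semitube {x : BR m | x.1 ∈ Ω}) := by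
  have hset : ∀ z v : ECx m,
      {t : ℂ | z + t • v ∈ semitube {x : BR m | x.1 ∈ Ω}} = {t : ℂ | z.1 + t • v.1 ∈ Ω} := by
    intro z v; rfl
  constructor
  · intro z v hv hne
    rw [hset] at hne ⊢
    by_cases hv1 : v.1 = 0
    · -- the slice is all of `ℂ`
      have : {t : ℂ | z.1 + t • v.1 ∈ Ω} = Set.univ := by
        obtain ⟨t0, ht0⟩ := hne
        ext t
        simp only [hv1, smul_zero, add_zero, Set.mem_setOf_eq, Set.mem_univ, iff_true]
        simpa [hv1] using ht0
      rw [this]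
      refine ⟨isConnected_univ, ?_⟩
      have : ContractibleSpace (Set.univ : Set ℂ) :=
        (convex_univ (𝕜 := ℝ)).contractibleSpace ⟨0, trivial⟩
      infer_instance
    · exact hΩcc z.1 v.1 hv1 hne
  · intro hconv
    apply hΩnotconv
    have : Ω = (fun w : Fin m → ℂ => ((w, 0) : ECx m)) ⁻¹' semitube {x : BR m | x.1 ∈ Ω} := rfl
    rw [this]
    exact hconv.is_linear_preimage
      ⟨fun _ _ => by simp [Prod.ext_iff], fun c w => by simp [Prod.ext_iff]⟩
end
end

section
/- Let D := {(z_1, z_2) ∈ C² : Re z_2 > |z_1|²}. Then D belongs to A_1^2; W_D = (C × (−∞,0)) ∪ {(0,0)}; S_D = [0,∞); and for v = (v_1, v_2) with v_2 < 0, the set P_D(v) = {p ∈ (C×R) ∩ closure(D) : Re((z−p)•v) < 0 for all z ∈ D} equals the single point (−conj(v_1)/(2v_2), |v_1/(2v_2)|²), while P_D(v) = ∅ for all other v ∈ C × R. -/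
open Complex Metric

noncomputable section

/-- The bilinear dot product on `ℂ²`. -/
def dot2 (z w : ℂ × ℂ) : ℂ := z.1 * w.1 + z.2 * w.2

/-- `D` belongs to the family `𝒜_1²`: `D ⊂ ℂ²` is a convex domain containing no complex
affine lines, invariant under translations by `{0} × iℝ`, and every real affine line
contained in `D` has direction in `{0} × iℝ`. -/
def InA12 (D : Set (ℂ × ℂ)) : Prop :=
  IsOpen D ∧ D.Nonempty ∧ Convex ℝ D ∧
  (∀ z v : ℂ × ℂ, v ≠ 0 → ∃ t : ℂ, z + t • v ∉ D) ∧
  (∀ z ∈ D, ∀ x : ℝ, (z.1, z.2 + (x : ℂ) * Complex.I) ∈ D) ∧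
  (∀ z v : ℂ × ℂ, (∀ t : ℝ, z + t • v ∈ D) → v.1 = 0 ∧ v.2.re = 0)

/-- The cone `W_D = {v : sup_{z ∈ D} Re (z • v) < ∞}`. -/
def WD (D : Set (ℂ × ℂ)) : Set (ℂ × ℂ) :=
  {v | ∃ C : ℝ, ∀ z ∈ D, (dot2 z v).re ≤ C}

/-- The cone `S_D = {y ∈ ℝ : (0,y) • v ≤ 0 for all v ∈ W_D}`. -/
def SD (D : Set (ℂ × ℂ)) : Set ℝ :=
  {y | ∀ v ∈ WD D, (dot2 ((0 : ℂ), (y : ℂ)) v).re ≤ 0}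

/-- The set `P_D(v) = {p ∈ (ℂ × ℝ) ∩ closure D : Re ((z - p) • v) < 0 for all z ∈ D}`. -/
def PD (D : Set (ℂ × ℂ)) (v : ℂ × ℂ) : Set (ℂ × ℂ) :=
  {p | p.2.im = 0 ∧ p ∈ closure D ∧ ∀ z ∈ D, (dot2 (z - p) v).re < 0}

def Dset : Set (ℂ × ℂ) := {z | ‖z.1‖ ^ 2 < z.2.re}

lemma memD {z : ℂ × ℂ} : z ∈ Dset ↔ z.1.re^2 + z.1.im^2 < z.2.re := by
  show ‖z.1‖ ^ 2 < z.2.re ↔ _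
  rw [Complex.sq_norm, Complex.normSq_apply]; ring_nf

lemma isOpenD : IsOpen Dset :=
  isOpen_lt (by continuity) (Complex.continuous_re.comp continuous_snd)

lemma convexD : Convex ℝ Dset := by
  intro z hz w hw a b ha hb hab
  rw [memD] at *
  simp only [Prod.fst_add, Prod.snd_add, Prod.smul_fst, Prod.smul_snd, Complex.add_re,
    Complex.add_im, Complex.real_smul, Complex.mul_re, Complex.mul_im, Complex.ofReal_re,
    Complex.ofReal_im]
  have h1 : 0 < a * (z.2.re - (z.1.re^2+z.1.im^2)) + b * (w.2.re - (w.1.re^2+w.1.im^2)) := by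
    rcases eq_or_lt_of_le ha with h | h
    · have hb1 : b = 1 := by linarith
      rw [← h, hb1]; simp; linarith
    · nlinarith [mul_pos h (by linarith : (0:ℝ) < z.2.re - (z.1.re^2+z.1.im^2)),
        mul_nonneg hb (by linarith : (0:ℝ) ≤ w.2.re - (w.1.re^2+w.1.im^2))]
  nlinarith [mul_nonneg (mul_nonneg ha hb) (sq_nonneg (z.1.re - w.1.re)),
    mul_nonneg (mul_nonneg ha hb) (sq_nonneg (z.1.im - w.1.im))]

lemma nonemptyD : Dset.Nonempty := ⟨((0:ℂ), (1:ℂ)), by rw [memD]; norm_num⟩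

lemma noComplexLine : ∀ z v : ℂ × ℂ, v ≠ 0 → ∃ t : ℂ, z + t • v ∉ Dset := by
  intro z v hv
  by_cases h2 : v.2 = 0
  · have h1 : v.1 ≠ 0 := fun h => hv (Prod.ext h h2)
    have hv1 : 0 < ‖v.1‖ := norm_pos_iff.mpr h1
    set T : ℝ := (‖z.1‖ + |z.2.re| + 1) / ‖v.1‖ with hT
    have hT0 : 0 ≤ T := by positivity
    refine ⟨(T:ℂ), fun hmem => ?_⟩
    have hmem' : ‖(z.1 + (T:ℂ) * v.1)‖ ^ 2 < (z.2 + (T:ℂ) * v.2).re := hmem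
    rw [h2, mul_zero, add_zero] at hmem'
    have h3 : ‖((T:ℂ) * v.1)‖ = T * ‖v.1‖ := by
      rw [norm_mul, Complex.norm_real, Real.norm_eq_abs, _root_.abs_of_nonneg hT0]
    have h4 : T * ‖v.1‖ = ‖z.1‖ + |z.2.re| + 1 := by
      rw [hT, div_mul_cancel₀ _ (ne_of_gt hv1)]
    have h5 : ‖((T:ℂ) * v.1)‖ ≤ ‖(z.1 + (T:ℂ) * v.1)‖ + ‖z.1‖ := by
      have h5' := norm_add_le (z.1 + (T:ℂ) * v.1) (-z.1)
      rw [show z.1 + (T:ℂ) * v.1 + -z.1 = (T:ℂ) * v.1 from by ring] at h5'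
      simpa using h5'
    have h6 : |z.2.re| + 1 ≤ ‖(z.1 + (T:ℂ) * v.1)‖ := by
      rw [h3, h4] at h5; linarith
    nlinarith [le_abs_self z.2.re, abs_nonneg z.2.re,
      sq_nonneg (‖(z.1 + (T:ℂ) * v.1)‖ - 1)]
  · refine ⟨-(z.2 + 1)/v.2, fun hmem => ?_⟩
    have hmem' : ‖(z.1 + (-(z.2 + 1)/v.2) * v.1)‖ ^ 2
        < (z.2 + (-(z.2 + 1)/v.2) * v.2).re := hmem
    have he : z.2 + (-(z.2 + 1)/v.2) * v.2 = -1 := by field_simp; ring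
    rw [he] at hmem'
    simp at hmem'
    nlinarith [sq_nonneg (‖(z.1 + (-(z.2 + 1)/v.2) * v.1)‖)]

lemma transInv : ∀ z ∈ Dset, ∀ x : ℝ, (z.1, z.2 + (x : ℂ) * Complex.I) ∈ Dset := by
  intro z hz x
  have : ‖z.1‖ ^ 2 < z.2.re := hz
  show ‖z.1‖ ^ 2 < (z.2 + (x:ℂ) * Complex.I).re
  simpa using this

lemma realLine : ∀ z v : ℂ × ℂ, (∀ t : ℝ, z + t • v ∈ Dset) → v.1 = 0 ∧ v.2.re = 0 := by
  intro z v hline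
  have key : ∀ t : ℝ, (z.1.re + t*v.1.re)^2 + (z.1.im + t*v.1.im)^2 < z.2.re + t*v.2.re := by
    intro t
    have h := hline t
    rw [memD] at h
    simp only [Prod.fst_add, Prod.snd_add, Prod.smul_fst, Prod.smul_snd, Complex.real_smul,
      Complex.add_re, Complex.add_im, Complex.mul_re, Complex.mul_im, Complex.ofReal_re,
      Complex.ofReal_im] at h
    nlinarith [h]
  have hv1 : v.1 = 0 := by
    by_contra h1
    have hA : 0 < v.1.re^2 + v.1.im^2 := by
      have := Complex.normSq_pos.mpr h1
      rw [Complex.normSq_apply] at this; nlinarith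
    obtain ⟨A, hAdef⟩ : ∃ A : ℝ, A = v.1.re^2 + v.1.im^2 := ⟨_, rfl⟩
    obtain ⟨B, hBdef⟩ : ∃ B : ℝ, B = 2*(z.1.re*v.1.re + z.1.im*v.1.im) - v.2.re := ⟨_, rfl⟩
    obtain ⟨C0, hCdef⟩ : ∃ C0 : ℝ, C0 = z.1.re^2 + z.1.im^2 - z.2.re := ⟨_, rfl⟩
    rw [← hAdef] at hA
    obtain ⟨t, htdef⟩ : ∃ t : ℝ, t = (|B| + |C0| + 1)/A + 1 := ⟨_, rfl⟩
    have hd : 0 ≤ (|B| + |C0| + 1)/A := by positivity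
    have ht1 : (1:ℝ) ≤ t := by rw [htdef]; linarith
    have ht0 : (0:ℝ) ≤ t := by linarith
    have ht2 : |B| + |C0| + 1 ≤ A * t := by
      rw [htdef, mul_add, mul_one, mul_div_cancel₀ _ (ne_of_gt hA)]
      nlinarith
    have hk : A*t^2 + B*t + C0 < 0 := by
      rw [hAdef, hBdef, hCdef]; nlinarith [key t]
    nlinarith [mul_le_mul_of_nonneg_left ht2 ht0,
      mul_le_mul_of_nonneg_right (neg_abs_le B) ht0,
      mul_le_mul_of_nonneg_right (neg_abs_le C0) ht0,
      le_abs_self C0, abs_nonneg C0, abs_nonneg B,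
      mul_le_mul_of_nonneg_left ht1 (abs_nonneg C0)]
  refine ⟨hv1, ?_⟩
  by_contra hc
  have hc' : v.2.re ≠ 0 := hc
  have h := key ((z.1.re^2 + z.1.im^2 - z.2.re - 1)/v.2.re)
  rw [div_mul_cancel₀ _ hc'] at h
  rw [hv1] at h
  simp at h
  nlinarith [h]

lemma inA12D : InA12 Dset :=
  ⟨isOpenD, nonemptyD, convexD, noComplexLine, transInv, realLine⟩

lemma dot2_re (z v : ℂ × ℂ) : (dot2 z v).re =
    z.1.re*v.1.re - z.1.im*v.1.im + (z.2.re*v.2.re - z.2.im*v.2.im) := by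
  simp [dot2, Complex.add_re, Complex.mul_re]

lemma WDeq : WD Dset = {v : ℂ × ℂ | v.2.im = 0 ∧ v.2.re < 0} ∪ {0} := by
  ext v
  simp only [WD, Set.mem_setOf_eq, Set.mem_union, Set.mem_singleton_iff]
  constructor
  · rintro ⟨C, hC⟩
    -- first: v.2.im = 0
    have him : v.2.im = 0 := by
      by_contra him
      have key : ∀ y : ℝ, v.2.re - y * v.2.im ≤ C := by
        intro y
        have h := hC ((0:ℂ), (1:ℂ) + (y:ℂ)*Complex.I) (by rw [memD]; simp)
        rw [dot2_re] at h
        simp at h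
        linarith
      have h1 := key ((v.2.re - C - 1)/v.2.im)
      rw [div_mul_cancel₀ _ him] at h1
      linarith
    have hre : v.2.re ≤ 0 := by
      by_contra hre
      push_neg at hre
      have key : ∀ t : ℝ, 0 < t → t * v.2.re ≤ C := by
        intro t ht
        have h := hC ((0:ℂ), (t:ℂ)) (by rw [memD]; simpa using ht)
        rw [dot2_re] at h
        simp at h
        linarith
      have h1 := key ((|C|+1)/v.2.re) (by positivity)
      rw [div_mul_cancel₀ _ (ne_of_gt hre)] at h1
      linarith [le_abs_self C]
    rcases eq_or_lt_of_le hre with h0 | h0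
    · right
      have hv1 : v.1 = 0 := by
        by_contra h1
        have hn : 0 < v.1.re^2 + v.1.im^2 := by
          have := Complex.normSq_pos.mpr h1
          rw [Complex.normSq_apply] at this; nlinarith
        have key : ∀ s : ℝ, 0 < s → s * (v.1.re^2 + v.1.im^2) ≤ C := by
          intro s hs
          have h := hC (((s:ℝ):ℂ) * ((starRingEnd ℂ) v.1), ((s^2*(v.1.re^2+v.1.im^2) + 1 : ℝ) : ℂ))
            (by rw [memD]; simp only [Complex.mul_re, Complex.mul_im, Complex.ofReal_re, Complex.ofReal_im, Complex.conj_re, Complex.conj_im]; nlinarith)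
          rw [dot2_re] at h
          simp only [Complex.mul_re, Complex.mul_im, Complex.ofReal_re, Complex.ofReal_im,
            Complex.conj_re, Complex.conj_im, h0, mul_zero, zero_mul] at h
          nlinarith [h]
        have h1 := key ((|C|+1)/(v.1.re^2+v.1.im^2)) (by positivity)
        rw [div_mul_cancel₀ _ (ne_of_gt hn)] at h1
        linarith [le_abs_self C]
      have hv2 : v.2 = 0 := Complex.ext (by simp [← h0]) (by simp [him])
      exact Prod.ext hv1 hv2
    · left; exact ⟨him, h0⟩
  · rintro (⟨him, hre⟩ | h0)
    · refine ⟨(v.1.re^2 + v.1.im^2)/(-(4*v.2.re)), fun z hz => ?_⟩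
      rw [memD] at hz
      rw [dot2_re, him, mul_zero, sub_zero, le_div_iff₀ (by linarith : (0:ℝ) < -(4*v.2.re))]
      nlinarith [sq_nonneg (2*v.2.re*z.1.re + v.1.re), sq_nonneg (2*v.2.re*z.1.im - v.1.im),
        mul_lt_mul_of_neg_left hz hre]
    · refine ⟨0, fun z hz => ?_⟩
      rw [h0, dot2_re]; simp

lemma SDeq : SD Dset = Set.Ici (0:ℝ) := by
  ext y
  simp only [SD, Set.mem_setOf_eq, Set.mem_Ici]
  constructor
  · intro h
    by_contra hy
    push_neg at hy
    have hW : ((0:ℂ), (-1:ℂ)) ∈ WD Dset := by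
      rw [WDeq]; left; norm_num
    have h0 := h _ hW
    rw [dot2_re] at h0
    simp at h0
    linarith
  · intro hy v hv
    rw [WDeq] at hv
    rcases hv with ⟨him, hre⟩ | h0
    · rw [dot2_re, him]
      simp only [Complex.ofReal_re, Complex.ofReal_im, Complex.zero_re, Complex.zero_im,
        zero_mul, mul_zero, sub_zero, zero_sub, zero_add]
      nlinarith [mul_nonneg hy (neg_nonneg.2 hre.le)]
    · rw [h0, dot2_re]; simp

lemma closureD_subset : closure Dset ⊆ {z : ℂ × ℂ | ‖z.1‖ ^ 2 ≤ z.2.re} :=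
 by
  apply closure_minimal
  · intro z hz
    show ‖z.1‖ ^ 2 ≤ z.2.re
    exact le_of_lt hz
  · exact isClosed_le (by continuity) (Complex.continuous_re.comp continuous_snd)

lemma mem_closureD {z : ℂ × ℂ} (h : ‖z.1‖ ^ 2 ≤ z.2.re) : z ∈ closure Dset := by
  have hcont : Continuous (fun ε : ℝ => ((z.1, z.2 + (ε:ℂ)) : ℂ × ℂ)) := by continuity
  have ht : Filter.Tendsto (fun ε : ℝ => ((z.1, z.2 + (ε:ℂ)) : ℂ × ℂ))
      (nhdsWithin 0 (Set.Ioi 0)) (nhds z) := by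
    have h2 : Filter.Tendsto (fun ε : ℝ => ((z.1, z.2 + (ε:ℂ)) : ℂ × ℂ))
        (nhdsWithin 0 (Set.Ioi 0)) (nhds (z.1, z.2 + ((0:ℝ):ℂ))) :=
      (hcont.tendsto 0).mono_left nhdsWithin_le_nhds
    simpa using h2
  refine mem_closure_of_tendsto ht ?_
  filter_upwards [self_mem_nhdsWithin] with ε hε
  have hε' : (0:ℝ) < ε := hε
  show ‖z.1‖ ^ 2 < (z.2 + (ε:ℂ)).re
  simp only [Complex.add_re, Complex.ofReal_re]
  linarith

lemma dot2_sub (z p v : ℂ × ℂ) : dot2 (z - p) v = dot2 z v - dot2 p v := by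
  simp [dot2]; ring

lemma identC (w z₂ v₁ : ℂ) (c : ℝ) (hc : c ≠ 0) :
    (dot2 (w, z₂) (v₁, (c:ℂ))).re =
      c * ‖(w + (starRingEnd ℂ) v₁ / (2*(c:ℂ)))‖^2
        + c * (z₂.re - ‖w‖ ^ 2) - (‖v₁‖)^2/(4*c) := by
  have h2c : (2*(c:ℂ)) = (((2*c : ℝ)):ℂ) := by push_cast; ring
  rw [h2c, Complex.sq_norm, Complex.sq_norm, Complex.sq_norm]
  simp only [dot2, Complex.add_re, Complex.mul_re, Complex.ofReal_re, Complex.ofReal_im,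
    Complex.normSq_apply, Complex.add_im, Complex.div_ofReal_re, Complex.div_ofReal_im,
    Complex.conj_re, Complex.conj_im, mul_zero, sub_zero]
  field_simp
  ring

lemma PDneg (v₁ : ℂ) (c : ℝ) (hc : c < 0) :
    PD Dset (v₁, (c:ℂ)) =
      {(-(starRingEnd ℂ) v₁ / (2 * (c:ℂ)),
        ((‖(v₁ / (2 * (c:ℂ)))‖ ^ 2 : ℝ) : ℂ))} := by
  have hc0 : c ≠ 0 := ne_of_lt hc
  set u : ℂ := (starRingEnd ℂ) v₁ / (2 * (c:ℂ)) with hu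
  set R : ℝ := ‖(v₁ / (2 * (c:ℂ)))‖ ^ 2 with hR
  have habsq : ‖(-u)‖ ^ 2 = R := by
    rw [hu, hR]; simp [norm_div, Complex.norm_conj]
  have hq1 : -(starRingEnd ℂ) v₁ / (2 * (c:ℂ)) = -u := by rw [hu]; ring
  ext p
  simp only [PD, Set.mem_setOf_eq, Set.mem_singleton_iff]
  constructor
  · rintro ⟨him, hcl, hlt⟩
    have hp2 : ‖p.1‖ ^ 2 ≤ p.2.re := closureD_subset hcl
    set M : ℝ := (dot2 p (v₁, (c:ℂ))).re with hM
    have step1 : ∀ ε : ℝ, 0 < ε → -(‖v₁‖^2/(4*c)) + c*ε < M := by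
      intro ε hε
      have hz : ((-u, ((R+ε:ℝ):ℂ)) : ℂ × ℂ) ∈ Dset := by
        show ‖(-u)‖ ^ 2 < ((R+ε:ℝ):ℂ).re
        rw [habsq, Complex.ofReal_re]; linarith
      have h := hlt _ hz
      rw [dot2_sub, Complex.sub_re] at h
      have hzval : (dot2 ((-u : ℂ), ((R+ε:ℝ):ℂ)) (v₁, (c:ℂ))).re
          = -(‖v₁‖^2/(4*c)) + c*ε := by
        rw [identC _ _ _ _ hc0, ← hu, show -u + u = 0 from by ring, habsq]
        simp
        ring
      rw [hzval] at h
      linarith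
    have step2 : -(‖v₁‖^2/(4*c)) ≤ M := by
      by_contra hM'
      push_neg at hM'
      have hε : 0 < (M - (-(‖v₁‖^2/(4*c))))/c :=
        div_pos_of_neg_of_neg (by linarith) hc
      have h := step1 _ hε
      have hcc : c * ((M - -(‖v₁‖^2/(4*c)))/c) = M - -(‖v₁‖^2/(4*c)) := by
        field_simp
      linarith
    have step3 : M = c * ‖(p.1 + u)‖^2 + c*(p.2.re - ‖p.1‖ ^ 2)
        - (‖v₁‖)^2/(4*c) := by
      rw [hM]
      exact identC p.1 p.2 v₁ c hc0
    have hH : (0:ℝ) ≤ ‖(p.1+u)‖^2 := sq_nonneg _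
    have hcH : c * ‖(p.1+u)‖^2 ≤ 0 := mul_nonpos_of_nonpos_of_nonneg hc.le hH
    have hcG : c * (p.2.re - ‖p.1‖ ^ 2) ≤ 0 :=
      mul_nonpos_of_nonpos_of_nonneg hc.le (by linarith)
    have hcH0 : 0 ≤ c * ‖(p.1+u)‖^2 := by linarith
    have hcG0 : 0 ≤ c * (p.2.re - ‖p.1‖ ^ 2) := by linarith
    have h5 : ‖(p.1+u)‖^2 = 0 := by
      rcases lt_or_eq_of_le hH with h | h
      · exfalso; nlinarith [mul_neg_of_neg_of_pos hc h]
      · exact h.symm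
    have h6 : p.2.re = ‖p.1‖ ^ 2 := by
      rcases lt_or_eq_of_le hp2 with h | h
      · exfalso
        nlinarith [mul_neg_of_neg_of_pos hc (by linarith : (0:ℝ) < p.2.re - ‖p.1‖ ^ 2)]
      · exact h.symm
    have h7 : p.1 = -u := by
      have := pow_eq_zero_iff (n := 2) (by norm_num) |>.mp h5
      have := norm_eq_zero.mp this
      linear_combination this
    have h8 : p.2 = ((R:ℝ):ℂ) := by
      apply Complex.ext
      · rw [Complex.ofReal_re, h6, h7, habsq]
      · rw [him, Complex.ofReal_im]
    rw [hq1]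
    exact Prod.ext h7 h8
  · intro hp
    rw [hq1] at hp
    subst hp
    refine ⟨by simp, mem_closureD (by rw [habsq]; simp), fun z hz => ?_⟩
    rw [dot2_sub, Complex.sub_re]
    have hqval : (dot2 ((-u : ℂ), ((R:ℝ):ℂ)) (v₁, (c:ℂ))).re
        = -(‖v₁‖^2/(4*c)) := by
      rw [identC _ _ _ _ hc0, ← hu, show -u + u = 0 from by ring, habsq]
      simp
    have hzval := identC z.1 z.2 v₁ c hc0
    rw [hzval, hqval]
    have hzD : ‖z.1‖ ^ 2 < z.2.re := hz
    have h1 : c * ‖(z.1 + u)‖^2 ≤ 0 :=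
      mul_nonpos_of_nonpos_of_nonneg hc.le (sq_nonneg _)
    have h2 : c * (z.2.re - ‖z.1‖ ^ 2) < 0 :=
      mul_neg_of_neg_of_pos hc (by linarith)
    rw [← hu]
    nlinarith [h1, h2]

lemma PDempty : ∀ v : ℂ × ℂ, v.2.im = 0 → ¬ v.2.re < 0 → PD Dset v = ∅ := by
  intro v him hre
  push_neg at hre
  ext p
  simp only [PD, Set.mem_setOf_eq, Set.mem_empty_iff_false, iff_false, not_and]
  rintro hpim hcl hlt
  rcases eq_or_lt_of_le hre with h0 | h0
  · have hv2 : v.2 = 0 := Complex.ext (by simp [← h0]) (by simp [him])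
    have hz : ((p.1 + (starRingEnd ℂ) v.1,
        ((‖(p.1 + (starRingEnd ℂ) v.1)‖^2 + 1 : ℝ):ℂ)) : ℂ × ℂ) ∈ Dset := by
      show ‖(p.1 + (starRingEnd ℂ) v.1)‖ ^ 2
          < (((‖(p.1 + (starRingEnd ℂ) v.1)‖^2 + 1 : ℝ)):ℂ).re
      rw [Complex.ofReal_re]
      linarith
    have h := hlt _ hz
    have he : dot2 (((p.1 + (starRingEnd ℂ) v.1,
        ((‖(p.1 + (starRingEnd ℂ) v.1)‖^2 + 1 : ℝ):ℂ)) : ℂ × ℂ) - p) v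
        = v.1 * (starRingEnd ℂ) v.1 := by
      simp [dot2, hv2]
      ring
    rw [he, Complex.mul_conj] at h
    rw [Complex.ofReal_re] at h
    exact absurd h (not_lt.2 (Complex.normSq_nonneg v.1))
  · set K : ℝ := p.1.re*v.1.re - p.1.im*v.1.im + p.2.re*v.2.re with hK
    set t : ℝ := (|K| + 1)/v.2.re with ht
    have ht0 : 0 < t := by
      have hK1 : 0 < |K| + 1 := by positivity
      rw [ht]
      exact div_pos hK1 h0
    have hz : (((0:ℂ), ((t:ℝ):ℂ)) : ℂ × ℂ) ∈ Dset := by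
      show ‖(0:ℂ)‖ ^ 2 < ((t:ℝ):ℂ).re
      simpa using ht0
    have h := hlt _ hz
    rw [dot2_re] at h
    simp only [Prod.fst_sub, Prod.snd_sub, Complex.sub_re, Complex.sub_im, Complex.zero_re,
      Complex.zero_im, Complex.ofReal_re, Complex.ofReal_im, him, mul_zero, zero_sub,
      sub_zero, Complex.neg_re, Complex.neg_im] at h
    have htv : t * v.2.re = |K| + 1 := by rw [ht]; exact div_mul_cancel₀ _ (ne_of_gt h0)
    nlinarith [le_abs_self K, h]

/-- For the paraboloid `D = {(z₁,z₂) : Re z₂ > |z₁|²}` one has `D ∈ 𝒜_1²`,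
`W_D = (ℂ × (-∞,0)) ∪ {0}`, `S_D = [0,∞)`, and `P_D(v₁,v₂) = {(-conj(v₁)/(2v₂), |v₁/(2v₂)|²)}`
when `v₂ < 0` is real, while `P_D(v) = ∅` for all other `v ∈ ℂ × ℝ`. -/
theorem example_paraboloid :
    let D : Set (ℂ × ℂ) := {z | ‖z.1‖ ^ 2 < z.2.re}
    InA12 D ∧
    WD D = {v : ℂ × ℂ | v.2.im = 0 ∧ v.2.re < 0} ∪ {0} ∧
    SD D = Set.Ici (0 : ℝ) ∧
    (∀ v₁ : ℂ, ∀ c : ℝ, c < 0 →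
      PD D (v₁, (c : ℂ)) =
        {(-(starRingEnd ℂ) v₁ / (2 * (c : ℂ)),
          ((‖v₁ / (2 * (c : ℂ))‖ ^ 2 : ℝ) : ℂ))}) ∧
    (∀ v : ℂ × ℂ, v.2.im = 0 → ¬ v.2.re < 0 → PD D v = ∅) := by
  intro D
  exact ⟨inA12D, WDeq, SDeq, fun v₁ c hc => PDneg v₁ c hc, PDempty⟩
end
end
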